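/- If an element g of a group G has a finite right Engel sink, then g has a smallest right Engel sink R(g) (namely, the intersection of all right Engel sinks of g is a right Engel sink of g), and for every z ∈ R(g) there are integers n ≥ 1 and m ≥ 1 and an element x ∈ G such that z = [g, x, ..., x] with x repeated n times and also z = [g, x, ..., x] with x repeated n + m times. -/

import Mathlib

open scoped commutatorElement

/-- Iterated left-normed commutator: `commIter g x n = [g, x, x, ..., x]` with `n` copies of `x`. -/
def commIter {G : Type*} [Group G] (g x : G) : ℕ → G
  | 0 => g
  | n + 1 => ⁅commIter g x n, x⁆

/-- `R` is a right Engel sink of `g`. -/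
def IsRightEngelSink {G : Type*} [Group G] (g : G) (R : Set G) : Prop :=
  ∀ x : G, ∃ n₀ : ℕ, 0 < n₀ ∧ ∀ n, n₀ ≤ n → commIter g x n ∈ R

/-- `E` is a left Engel sink of `g`. -/
def IsLeftEngelSink {G : Type*} [Group G] (g : G) (E : Set G) : Prop :=
  ∀ x : G, ∃ n₀ : ℕ, 0 < n₀ ∧ ∀ n, n₀ ≤ n → commIter x g n ∈ E

/-- A group is locally nilpotent if every finitely generated subgroup is nilpotent. -/
def IsLocallyNilpotent (G : Type*) [Group G] : Prop :=
  ∀ S : Finset G, Group.IsNilpotent ↥(Subgroup.closure (S : Set G))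

/-- A topological group is pronilpotent if every quotient by an open normal subgroup
is nilpotent. -/
def IsPronilpotent (G : Type*) [Group G] [TopologicalSpace G] : Prop :=
  ∀ (N : Subgroup G) (hN : N.Normal), IsOpen (N : Set G) →
    (haveI := hN; Group.IsNilpotent (G ⧸ N))

/-- All quotients of `G` by open normal subgroups have order coprime to `k`;
this is the coprimality condition for an automorphism of order `k` of `G`. -/
def QuotientsCoprimeTo (G : Type*) [Group G] [TopologicalSpace G] (k : ℕ) : Prop :=
  ∀ N : Subgroup G, N.Normal → IsOpen (N : Set G) → Nat.Coprime N.index k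

/-- `F` is the largest closed normal pronilpotent subgroup of `G`
(the pronilpotent radical `F(G)`). -/
def IsPronilpotentRadical (G : Type*) [Group G] [TopologicalSpace G] (F : Subgroup G) : Prop :=
  IsClosed (F : Set G) ∧ F.Normal ∧ IsPronilpotent ↥F ∧
    ∀ K : Subgroup G, IsClosed (K : Set G) → K.Normal → IsPronilpotent ↥K → K ≤ F

/-- `F2` is the second term of the pronilpotent series: the preimage in `G` of the
pronilpotent radical of `G ⧸ F`. -/
def IsSecondRadical (G : Type*) [Group G] [TopologicalSpace G] (F : Subgroup G) [F.Normal]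
    (F2 : Subgroup G) : Prop :=
  ∃ Fq : Subgroup (G ⧸ F), IsPronilpotentRadical (G ⧸ F) Fq ∧
    F2 = Fq.comap (QuotientGroup.mk' F)

/-- The Frattini subgroup of a topological group: the intersection of all maximal
open subgroups. -/
def frattiniOpen (G : Type*) [Group G] [TopologicalSpace G] : Subgroup G :=
  ⨅ (M : Subgroup G) (_ : IsOpen (M : Set G) ∧ IsCoatom M), M

/-- `γ_∞(G)`: the intersection of the closures of the lower central series. -/
def gammaInf (G : Type*) [Group G] [TopologicalSpace G] [IsTopologicalGroup G] : Subgroup G :=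
  ⨅ n : ℕ, ((⊤ : Subgroup G).lowerCentralSeries n).topologicalClosure

/-- `g` is a `p`-element: the closed subgroup it topologically generates is pro-`p`. -/
def IsPElement {G : Type*} [Group G] [TopologicalSpace G] [IsTopologicalGroup G]
    (p : ℕ) (g : G) : Prop :=
  ∀ M : Subgroup ↥((Subgroup.closure {g}).topologicalClosure),
    M.Normal → IsOpen (M : Set ↥((Subgroup.closure {g}).topologicalClosure)) →
      ∃ k : ℕ, M.index = p ^ k

/-- `K` is the Hall `p'`-subgroup of the pronilpotent group `F`: the largest closed
subgroup normal in `F` all of whose finite quotients have order coprime to `p`. -/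
def IsHallPComplement (G : Type*) [Group G] [TopologicalSpace G] (p : ℕ)
    (F K : Subgroup G) : Prop :=
  K ≤ F ∧ IsClosed (K : Set G) ∧ (K.subgroupOf F).Normal ∧ QuotientsCoprimeTo ↥K p ∧
    ∀ K' : Subgroup G, K' ≤ F → IsClosed (K' : Set G) → (K'.subgroupOf F).Normal →
      QuotientsCoprimeTo ↥K' p → K' ≤ K

private lemma commIter_add {G : Type*} [Group G] (g x : G) (n k : ℕ) :
    commIter g x (n + k) = commIter (commIter g x n) x k := by
  induction k with
  | zero => rfl
  | succ k ih =>
    have : n + (k + 1) = (n + k) + 1 := by omega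
    rw [this]
    simp only [commIter, ih]

private lemma commIter_periodic_mul {G : Type*} [Group G] (g x : G) (i p : ℕ)
    (h : commIter g x i = commIter g x (i + p)) (t : ℕ) :
    commIter g x i = commIter g x (i + t * p) := by
  induction t with
  | zero => simp
  | succ t ih =>
    have step : commIter g x (i + t * p) = commIter g x (i + p + t * p) := by
      rw [commIter_add g x i (t * p), commIter_add g x (i + p) (t * p), h]
    have harith : i + p + t * p = i + (t + 1) * p := by ring
    rw [ih, step, harith]

private def sinkS {G : Type} [Group G] (g : G) : Set G :=
  {z | ∃ (n m : ℕ) (x : G), 1 ≤ n ∧ 1 ≤ m ∧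
    z = commIter g x n ∧ z = commIter g x (n + m)}

private lemma sinkS_subset {G : Type} [Group G] (g : G) (R : Set G)
    (hR : IsRightEngelSink g R) : sinkS g ⊆ R := by
  rintro z ⟨n, m, x, hn, hm, hz1, hz2⟩
  obtain ⟨n₀, hn₀, hmem⟩ := hR x
  have key : ∀ t, z = commIter g x (n + t * m) := by
    intro t
    rw [hz1]
    exact commIter_periodic_mul g x n m (hz1 ▸ hz2) t
  have : z = commIter g x (n + n₀ * m) := key n₀
  rw [this]
  exact hmem _ (by nlinarith)

private lemma sinkS_isSink {G : Type} [Group G] (g : G)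
    (h : ∃ R : Set G, R.Finite ∧ IsRightEngelSink g R) :
    IsRightEngelSink g (sinkS g) := by
  obtain ⟨R₀, hfin, hR₀⟩ := h
  intro x
  obtain ⟨n₀, hn₀, hmem⟩ := hR₀ x
  haveI := hfin.to_subtype
  set f : ℕ → R₀ := fun k => ⟨commIter g x (n₀ + k), hmem _ (by omega)⟩ with hf
  obtain ⟨i, j, hne, heq⟩ := Finite.exists_ne_map_eq_of_infinite f
  have heq' : commIter g x (n₀ + i) = commIter g x (n₀ + j) := by
    simpa [hf, Subtype.ext_iff] using heq
  -- wlog i < j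
  obtain ⟨a, p, hp, hpe⟩ : ∃ a p : ℕ, 1 ≤ p ∧
      commIter g x (n₀ + a) = commIter g x (n₀ + a + p) := by
    rcases Nat.lt_or_ge i j with hlt | hge
    · exact ⟨i, j - i, by omega, by rw [heq']; congr 1; omega⟩
    · have hlt : j < i := by omega
      exact ⟨j, i - j, by omega, by rw [← heq']; congr 1; omega⟩
  refine ⟨n₀ + a, by omega, fun n hn => ?_⟩
  refine ⟨n, p, x, by omega, hp, rfl, ?_⟩
  obtain ⟨k, rfl⟩ := Nat.exists_eq_add_of_le hn
  have := congrArg (fun w => commIter w x k) hpe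
  simp only [← commIter_add] at this
  rw [show n₀ + a + k + p = n₀ + a + p + k by ring]
  exact this

theorem smallest_right_engel_sink
    (G : Type) [Group G] (g : G)
    (h : ∃ R : Set G, R.Finite ∧ IsRightEngelSink g R) :
    IsRightEngelSink g (⋂₀ {R : Set G | IsRightEngelSink g R}) ∧
      ∀ z ∈ ⋂₀ {R : Set G | IsRightEngelSink g R},
        ∃ (n m : ℕ) (x : G), 1 ≤ n ∧ 1 ≤ m ∧
          z = commIter g x n ∧ z = commIter g x (n + m) := by
  have hS := sinkS_isSink g h
  have hsub : sinkS g ⊆ ⋂₀ {R : Set G | IsRightEngelSink g R} := by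
    intro z hz R hR
    exact sinkS_subset g R hR hz
  constructor
  · intro x
    obtain ⟨n₀, hn₀, hmem⟩ := hS x
    exact ⟨n₀, hn₀, fun n hn => hsub (hmem n hn)⟩
  · intro z hz
    exact hz (sinkS g) hS
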